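/- Let F be a free group of finite rank, let H be a finitely generated subgroup of F, and let u ∈ F. Then the coset spectrum of F with respect to Hu is bounded: there exists N ∈ ℕ such that for every w ∈ F, Ord_{Hu}(w) ≤ N. In particular, the spectrum Ord_H(F) is bounded. -/

import Mathlib

/-- The relative order of `g` in the subgroup `H`: the least `k ≥ 1` with `g ^ k ∈ H`,
and `0` if no such `k` exists. -/
noncomputable def relOrd {G : Type*} [Group G] (H : Subgroup G) (g : G) : ℕ :=
  sInf {k : ℕ | 1 ≤ k ∧ g ^ k ∈ H}

/-- The relative order of `g` in the coset `Hu`: the least `k ≥ 1` with `g ^ k ∈ Hu`,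
and `0` if no such `k` exists. -/
noncomputable def relOrdCoset {G : Type*} [Group G] (H : Subgroup G) (u g : G) : ℕ :=
  sInf {k : ℕ | 1 ≤ k ∧ g ^ k * u⁻¹ ∈ H}

namespace CosetSpec
open FreeGroup List

variable {n : ℕ}

abbrev A (n : ℕ) := Fin n × Bool

def flip (a : A n) : A n := (a.1, !a.2)

@[simp] lemma flip_flip (a : A n) : flip (flip a) = a := by
  cases a; simp [flip]

def Reduced (l : List (A n)) : Prop :=
  l.Chain' (fun a b => ¬ (b.1 = a.1 ∧ b.2 = !a.2))

lemma reduce_eq_self_of_reduced : ∀ {l : List (A n)}, Reduced l → reduce l = l := by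
  intro l
  induction l with
  | nil => intro _; rfl
  | cons a t ih =>
    intro h
    have ht : Reduced t := h.tail
    rw [reduce.cons, ih ht]
    cases t with
    | nil => rfl
    | cons b t' =>
      have hab : ¬ (b.1 = a.1 ∧ b.2 = !a.2) := (List.isChain_cons_cons.1 h).1
      have : ¬ (a.1 = b.1 ∧ a.2 = !b.2) := by
        rintro ⟨h1, h2⟩
        exact hab ⟨h1.symm, by simp [h2]⟩
      simp [this]

lemma reduced_reduce (l : List (A n)) : Reduced (reduce l) := by
  induction l with
  | nil => exact List.isChain_nil
  | cons a t ih =>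
    rw [reduce.cons]
    rcases hr : reduce t with _ | ⟨b, t'⟩
    · exact List.isChain_singleton _
    · rw [hr] at ih
      by_cases hc : a.1 = b.1 ∧ a.2 = !b.2
      · simp only [hc, if_true]
        exact ih.tail
      · simp only [hc, if_false]
        refine List.isChain_cons_cons.2 ⟨?_, ih⟩
        rintro ⟨h1, h2⟩
        exact hc ⟨h1.symm, by simp [h2]⟩

lemma reduced_iff {l : List (A n)} : Reduced l ↔ reduce l = l :=
  ⟨reduce_eq_self_of_reduced, fun h => h ▸ reduced_reduce l⟩

lemma reduced_toWord (g : FreeGroup (Fin n)) : Reduced (toWord g) :=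
  reduced_iff.2 (reduce_toWord g)

lemma toWord_eq_of_reduced {l : List (A n)} (h : Reduced l) : toWord (mk l) = l := by
  rw [toWord_mk, reduce_eq_self_of_reduced h]

lemma invRev_eq (l : List (A n)) : invRev l = (l.map flip).reverse := by
  simp [invRev, flip]

@[simp] lemma head?_invRev (l : List (A n)) :
    (invRev l).head? = l.getLast?.map flip := by
  rw [invRev_eq, List.head?_reverse, List.getLast?_map]

@[simp] lemma getLast?_invRev (l : List (A n)) :
    (invRev l).getLast? = l.head?.map flip := by
  rw [invRev_eq, List.getLast?_reverse, List.head?_map]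

lemma reduced_invRev {l : List (A n)} (h : Reduced l) : Reduced (invRev l) := by
  rw [reduced_iff] at h ⊢
  rw [reduce_invRev, h]

/-- cyclically reduced condition -/
def CycRed (c : List (A n)) : Prop :=
  ∀ a ∈ c.getLast?, ∀ b ∈ c.head?, ¬ (b.1 = a.1 ∧ b.2 = !a.2)

lemma decomp_word (w : List (A n)) (hred : Reduced w) (hne : w ≠ []) :
    ∃ p c : List (A n), c ≠ [] ∧ w = p ++ c ++ invRev p ∧ CycRed c := by
  obtain ⟨N, hN⟩ : ∃ N, w.length = N := ⟨_, rfl⟩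
  induction N using Nat.strong_induction_on generalizing w with
  | _ N ih => ?_
  subst hN
  by_cases hcyc : CycRed w
  · exact ⟨[], w, hne, by simp, hcyc⟩
  · simp only [CycRed, not_forall] at hcyc
    obtain ⟨z, hz, b, hb, hzb⟩ := hcyc
    obtain ⟨h1, h2⟩ : b.1 = z.1 ∧ b.2 = !z.2 := not_not.1 hzb
    obtain ⟨b0, t, rfl⟩ := List.exists_cons_of_ne_nil hne
    have hb0 : b = b0 := by have := hb; simp at this; exact this.symm
    have htne : t ≠ [] := by
      rintro rfl
      have hzb0 : z = b0 := by have := hz; simp at this; exact this.symm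
      rw [hb0, hzb0] at h2
      simp at h2
    obtain ⟨t', z0, rfl⟩ : ∃ t' z0, t = t' ++ [z0] := by
      rcases List.eq_nil_or_concat t with h | ⟨t', z0, h⟩
      · exact absurd h htne
      · exact ⟨t', z0, by simpa using h⟩
    have hz0 : z = z0 := by
      have h := hz
      rw [List.getLast?_cons] at h
      simp at h
      exact h.symm
    rw [hb0, hz0] at h1 h2
    clear hz hb hzb hb0 hz0 htne hne
    have ht'red : Reduced t' := hred.infix ⟨[b0], [z0], by simp⟩
    by_cases ht'ne : t' = []
    · subst ht'ne
      exfalso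
      have h := (List.isChain_cons_cons.1 hred).1
      refine h ⟨h1.symm, ?_⟩
      rw [h2]
      simp
    · obtain ⟨p', c, hcne, hteq, hcy⟩ := ih t'.length
        (by simp only [List.length_cons, List.length_append, List.length_singleton]; omega)
        t' ht'red ht'ne rfl
      refine ⟨b0 :: p', c, hcne, ?_, hcy⟩
      have hzflip : z0 = flip b0 := by
        have ha : z0.1 = (flip b0).1 := by simp [flip, h1.symm]
        have h2' : z0.2 = (flip b0).2 := by simp [flip, h2]
        exact Prod.ext ha h2'
      have hinv : invRev (b0 :: p') = invRev p' ++ [flip b0] := by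
        simp [invRev_eq]
      rw [hinv, hzflip, hteq]
      simp

lemma flatten_replicate_succ (k : ℕ) (c : List (A n)) :
    (List.replicate (k+1) c).flatten = c ++ (List.replicate k c).flatten := by
  simp [List.replicate_succ]

lemma flatten_replicate_add (j k : ℕ) (c : List (A n)) :
    (List.replicate (j+k) c).flatten
      = (List.replicate j c).flatten ++ (List.replicate k c).flatten := by
  rw [List.replicate_add, List.flatten_append]

lemma head?_flatten_replicate {k : ℕ} (hk : 1 ≤ k) (c : List (A n)) (hc : c ≠ []) :
    (List.replicate k c).flatten.head? = c.head? := by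
  obtain ⟨k, rfl⟩ := Nat.exists_eq_add_of_le hk
  rw [Nat.add_comm, flatten_replicate_succ, List.head?_append_of_ne_nil _ hc]

lemma getLast?_flatten_replicate {k : ℕ} (hk : 1 ≤ k) (c : List (A n)) (hc : c ≠ []) :
    (List.replicate k c).flatten.getLast? = c.getLast? := by
  induction k with
  | zero => omega
  | succ k ih =>
    rcases Nat.eq_or_lt_of_le hk with h | h
    · simp [← h]
    · have hk1 : 1 ≤ k := by omega
      rw [flatten_replicate_succ, List.getLast?_append_of_ne_nil, ih hk1]
      intro hnil
      have := head?_flatten_replicate hk1 c hc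
      rw [hnil] at this
      simp at this
      exact hc (by simpa using this.symm)

lemma reduced_flatten_replicate {k : ℕ} (c : List (A n)) (hc : c ≠ [])
    (hred : Reduced c) (hcyc : CycRed c) :
    Reduced (List.replicate k c).flatten := by
  induction k with
  | zero => exact List.isChain_nil
  | succ k ih =>
    rw [flatten_replicate_succ]
    refine List.isChain_append.2 ⟨hred, ih, ?_⟩
    intro x hx y hy
    rcases Nat.eq_zero_or_pos k with rfl | hk
    · simp at hy
    · rw [head?_flatten_replicate hk c hc] at hy
      exact hcyc x hx y hy

lemma reduced_pow_word (p c : List (A n)) (hc : c ≠ []) (hcyc : CycRed c)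
    (hred : Reduced (p ++ c ++ invRev p)) {k : ℕ} (hk : 1 ≤ k) :
    Reduced (p ++ (List.replicate k c).flatten ++ invRev p) := by
  rw [List.append_assoc] at hred ⊢
  obtain ⟨hp, hrest, hj1⟩ := List.isChain_append.1 hred
  obtain ⟨hcred, hip, hj2⟩ := List.isChain_append.1 hrest
  refine List.isChain_append.2 ⟨hp, ?_, ?_⟩
  · refine List.isChain_append.2 ⟨reduced_flatten_replicate c hc hcred hcyc, hip, ?_⟩
    intro x hx y hy
    rw [getLast?_flatten_replicate hk c hc] at hx
    exact hj2 x hx y hy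
  · intro x hx y hy
    refine hj1 x hx y ?_
    rcases List.eq_nil_or_concat c with rfl | _
    · exact absurd rfl hc
    have hfne : (List.replicate k c).flatten ≠ [] := by
      intro hnil
      have := head?_flatten_replicate hk c hc
      rw [hnil] at this
      simp at this
      exact hc (by simpa using this.symm)
    rw [List.head?_append_of_ne_nil _ hfne] at hy
    rw [List.head?_append_of_ne_nil _ hc]
    rwa [head?_flatten_replicate hk c hc] at hy

lemma decomp (g : FreeGroup (Fin n)) (hg : g ≠ 1) :
    ∃ p c : List (A n), c ≠ [] ∧
      ∀ k : ℕ, 1 ≤ k → (g ^ k).toWord = p ++ (List.replicate k c).flatten ++ invRev p := by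
  have hne : g.toWord ≠ [] := fun h => hg (toWord_eq_nil_iff.1 h)
  obtain ⟨p, c, hc, hw, hcyc⟩ := decomp_word g.toWord (reduced_toWord g) hne
  refine ⟨p, c, hc, fun k hk => ?_⟩
  have hred : Reduced (p ++ c ++ invRev p) := hw ▸ reduced_toWord g
  have hcred : Reduced c := by
    rw [List.append_assoc] at hred
    exact ((List.isChain_append.1 hred).2.1).left_of_append
  have hgeq : g = mk p * mk c * (mk p)⁻¹ := by
    conv_lhs => rw [← mk_toWord (x := g), hw]
    rw [inv_mk, ← mul_mk, ← mul_mk]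
  have hpow : g ^ k = mk (p ++ (List.replicate k c).flatten ++ invRev p) := by
    rw [hgeq]
    have : (mk p * mk c * (mk p)⁻¹) ^ k = mk p * (mk c) ^ k * (mk p)⁻¹ := by
      rw [← MulAut.conj_apply, ← map_pow]
      rfl
    rw [this, pow_mk, inv_mk, mul_mk, mul_mk]
  rw [hpow, toWord_mk,
    reduce_eq_self_of_reduced (reduced_pow_word p c hc hcyc hred hk)]

section Graph

variable (H : Subgroup (FreeGroup (Fin n)))

abbrev Q := Quotient (QuotientGroup.rightRel H)

/-- image of x in the right coset space -/
def po (x : FreeGroup (Fin n)) : Q H := Quotient.mk _ x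

lemma po_eq_iff {x y : FreeGroup (Fin n)} : po H x = po H y ↔ y * x⁻¹ ∈ H := by
  constructor
  · intro h
    exact (QuotientGroup.rightRel_apply).1 (Quotient.exact h)
  · intro h
    exact Quotient.sound ((QuotientGroup.rightRel_apply).2 h)

/-- one-step Schreier transition -/
def step (q : Q H) (a : A n) : Q H :=
  Quotient.map (· * mk [a]) (by
    intro x y hxy
    have h : y * x⁻¹ ∈ H := QuotientGroup.rightRel_apply.1 hxy
    show (QuotientGroup.rightRel H) (x * mk [a]) (y * mk [a])
    rw [QuotientGroup.rightRel_apply]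
    have key : y * mk [a] * (x * mk [a])⁻¹ = y * x⁻¹ := by group
    rw [key]
    exact h) q

@[simp] lemma step_po (x : FreeGroup (Fin n)) (a : A n) :
    step H (po H x) a = po H (x * mk [a]) := rfl

lemma mk_single_mul_flip (a : A n) : mk [a] * mk [flip a] = (1 : FreeGroup (Fin n)) := by
  rw [mul_mk]
  have : reduce ([a] ++ [flip a]) = reduce ([] : List (A n)) := by
    cases a with
    | mk x b => simp [flip, reduce]
  rw [reduce.exact this]
  rfl

lemma step_step_flip (q : Q H) (a : A n) : step H (step H q a) (flip a) = q := by
  induction q using Quotient.inductionOn with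
  | h x =>
    show step H (step H (po H x) a) (flip a) = po H x
    rw [step_po, step_po, mul_assoc, mk_single_mul_flip, mul_one]

/-- edge reversal -/
def invE (e : Q H × A n × Q H) : Q H × A n × Q H := (e.2.2, flip e.2.1, e.1)

/-- the full Schreier edge set -/
def Sch : Set (Q H × A n × Q H) := {e | e.2.2 = step H e.1 e.2.1}

lemma invE_mem_sch {e : Q H × A n × Q H} (he : e ∈ Sch H) : invE H e ∈ Sch H := by
  obtain ⟨q, a, m⟩ := e
  simp only [Sch, Set.mem_setOf_eq] at he ⊢
  simp only [invE]
  rw [he, step_step_flip]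

/-- reading a word along edges of E -/
def Reads (E : Set (Q H × A n × Q H)) : Q H → List (A n) → Q H → Prop
  | q, [], q' => q = q'
  | q, a :: l, q' => ∃ m, (q, a, m) ∈ E ∧ Reads E m l q'

variable {H}

@[simp] lemma reads_nil {E} {q q' : Q H} : Reads H E q [] q' ↔ q = q' := Iff.rfl

@[simp] lemma reads_cons {E} {q q' : Q H} {a : A n} {l : List (A n)} :
    Reads H E q (a :: l) q' ↔ ∃ m, (q, a, m) ∈ E ∧ Reads H E m l q' := Iff.rfl

lemma reads_append {E} {l₁ l₂ : List (A n)} :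
    ∀ {q q'' : Q H}, Reads H E q (l₁ ++ l₂) q'' ↔
      ∃ q', Reads H E q l₁ q' ∧ Reads H E q' l₂ q'' := by
  induction l₁ with
  | nil => intro q q''; simp
  | cons a l ih =>
    intro q q''
    simp only [List.cons_append, reads_cons, ih]
    constructor
    · rintro ⟨m, he, q', h1, h2⟩
      exact ⟨q', ⟨m, he, h1⟩, h2⟩
    · rintro ⟨q', ⟨m, he, h1⟩, h2⟩
      exact ⟨m, he, q', h1, h2⟩

lemma reads_target {E} (hsch : E ⊆ Sch H) {l : List (A n)} :
    ∀ {q q' : Q H}, Reads H E q l q' → q' = List.foldl (step H) q l := by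
  induction l with
  | nil => intro q q' h; exact h.symm
  | cons a l ih =>
    rintro q q' ⟨m, he, hr⟩
    have hm : m = step H q a := hsch he
    rw [List.foldl_cons, ← hm]
    exact ih hr

lemma foldl_step_po (l : List (A n)) :
    ∀ x : FreeGroup (Fin n), List.foldl (step H) (po H x) l = po H (x * mk l) := by
  induction l with
  | nil =>
    intro x
    show po H x = po H (x * mk [])
    rw [← one_eq_mk, mul_one]
  | cons a l ih =>
    intro x
    rw [List.foldl_cons, step_po, ih, mul_assoc, mul_mk]
    rfl

lemma invRev_cons (a : A n) (l : List (A n)) :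
    invRev (a :: l) = invRev l ++ [flip a] := by
  simp [invRev_eq]

lemma reads_invRev {E} (hsym : ∀ e ∈ E, invE H e ∈ E) {l : List (A n)} :
    ∀ {q q' : Q H}, Reads H E q l q' → Reads H E q' (invRev l) q := by
  induction l with
  | nil =>
    intro q q' h
    rw [show invRev ([] : List (A n)) = [] from rfl]
    exact h.symm
  | cons a l ih =>
    rintro q q' ⟨m, he, hr⟩
    rw [invRev_cons, reads_append]
    exact ⟨m, ih hr, q, hsym _ he, rfl⟩

lemma reads_redstep {E} (hsch : E ⊆ Sch H) {l₁ l₂ : List (A n)}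
    (hstep : Red.Step l₁ l₂) {q q' : Q H} (hr : Reads H E q l₁ q') :
    Reads H E q l₂ q' := by
  cases hstep with
  | @not w v x b => ?_
  rw [reads_append] at hr
  obtain ⟨m, hw, hrest⟩ := hr
  obtain ⟨m₁, he₁, m₂, he₂, hv⟩ := hrest
  have h1 : m₁ = step H m (x, b) := hsch he₁
  have h2 : m₂ = step H m₁ (x, !b) := hsch he₂
  have : m₂ = m := by
    rw [h2, h1]
    exact step_step_flip H m (x, b)
  rw [reads_append]
  exact ⟨m, hw, this ▸ hv⟩

lemma reads_red {E} (hsch : E ⊆ Sch H) {l₁ l₂ : List (A n)}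
    (hred : Red l₁ l₂) {q q' : Q H} (hr : Reads H E q l₁ q') :
    Reads H E q l₂ q' := by
  induction hred with
  | refl => exact hr
  | tail _ hstep ih => exact reads_redstep hsch hstep ih

/-- vertices touched by E -/
def Vset (E : Set (Q H × A n × Q H)) : Set (Q H) :=
  {q | ∃ e ∈ E, q = e.1 ∨ q = e.2.2}

lemma reads_start_mem {E} {q q' : Q H} {a : A n} {l : List (A n)}
    (h : Reads H E q (a :: l) q') : q ∈ Vset E := by
  obtain ⟨m, he, _⟩ := h
  exact ⟨_, he, Or.inl rfl⟩

lemma reads_end_mem {E} {l : List (A n)} :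
    ∀ {q q' : Q H}, Reads H E q l q' → l ≠ [] → q' ∈ Vset E := by
  induction l with
  | nil => intro _ _ _ h; exact absurd rfl h
  | cons a l ih =>
    rintro q q' ⟨m, he, hr⟩ _
    rcases eq_or_ne l [] with rfl | hl
    · rw [reads_nil] at hr
      exact ⟨_, he, Or.inr (by rw [hr])⟩
    · exact ih hr hl

lemma vset_finite {E : Set (Q H × A n × Q H)} (hE : E.Finite) : (Vset E).Finite := by
  have hsub : Vset E ⊆ (fun e : Q H × A n × Q H => e.1) '' E ∪
      (fun e : Q H × A n × Q H => e.2.2) '' E := by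
    rintro q ⟨e, he, h | h⟩
    · exact Or.inl ⟨e, he, h.symm⟩
    · exact Or.inr ⟨e, he, h.symm⟩
  exact ((hE.image _).union (hE.image _)).subset hsub

variable (H)

/-- edges of the path reading l starting at x -/
def pathEdges : FreeGroup (Fin n) → List (A n) → Set (Q H × A n × Q H)
  | _, [] => ∅
  | x, a :: l => insert (po H x, a, po H (x * mk [a])) (pathEdges (x * mk [a]) l)

variable {H}

lemma pathEdges_sub_sch : ∀ (x : FreeGroup (Fin n)) (l : List (A n)),
    pathEdges H x l ⊆ Sch H := by
  intro x l
  induction l generalizing x with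
  | nil => exact Set.empty_subset _
  | cons a l ih =>
    rintro e (rfl | he)
    · rfl
    · exact ih _ he

lemma pathEdges_finite : ∀ (x : FreeGroup (Fin n)) (l : List (A n)),
    (pathEdges H x l).Finite := by
  intro x l
  induction l generalizing x with
  | nil => exact Set.finite_empty
  | cons a l ih => exact (ih _).insert _

lemma reads_path {E} : ∀ (x : FreeGroup (Fin n)) (l : List (A n)),
    pathEdges H x l ⊆ E → Reads H E (po H x) l (po H (x * mk l)) := by
  intro x l
  induction l generalizing x with
  | nil =>
    intro _
    rw [← one_eq_mk, mul_one]
    rfl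
  | cons a l ih =>
    intro hsub
    refine ⟨po H (x * mk [a]), hsub (Set.mem_insert _ _), ?_⟩
    have := ih (x * mk [a]) (fun e he => hsub (Set.mem_insert_of_mem _ he))
    rwa [mul_assoc, mul_mk, List.singleton_append] at this

lemma reads_start_mem' {E} {q q' : Q H} {l : List (A n)}
    (h : Reads H E q l q') (hl : l ≠ []) : q ∈ Vset E := by
  obtain ⟨a, t, rfl⟩ := List.exists_cons_of_ne_nil hl
  exact reads_start_mem h

lemma reads_flatten_split {E} {c : List (A n)} :
    ∀ {k : ℕ} {q q' : Q H}, Reads H E q (List.replicate k c).flatten q' →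
      ∃ r : ℕ → Q H, r 0 = q ∧ r k = q' ∧ ∀ i < k, Reads H E (r i) c (r (i + 1)) := by
  intro k
  induction k with
  | zero =>
    intro q q' h
    rw [show (List.replicate 0 c).flatten = [] from rfl, reads_nil] at h
    exact ⟨fun _ => q, rfl, h.symm ▸ rfl, fun i hi => absurd hi (Nat.not_lt_zero i)⟩
  | succ k ih =>
    intro q q' h
    rw [flatten_replicate_succ, reads_append] at h
    obtain ⟨m, hc, hrest⟩ := h
    obtain ⟨r, hr0, hrk, hr⟩ := ih hrest
    refine ⟨fun i => if i = 0 then q else r (i - 1), by simp, by simp [hrk], ?_⟩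
    intro i hi
    rcases Nat.eq_zero_or_pos i with rfl | hipos
    · simpa [hr0] using hc
    · have h1 : ¬ (i = 0) := by omega
      have h2 : ¬ (i + 1 = 0) := by omega
      simp only [h1, h2, if_false]
      have : i - 1 + 1 = i := by omega
      have hlt : i - 1 < k := by omega
      have hh := hr (i - 1) hlt
      rw [show i - 1 + 1 = i from by omega] at hh
      rwa [show i + 1 - 1 = i from by omega]

lemma reads_flatten_of {E} {c : List (A n)} {k : ℕ} (r : ℕ → Q H)
    (h : ∀ i < k, Reads H E (r i) c (r (i + 1))) :
    ∀ (d i : ℕ), i + d ≤ k → Reads H E (r i) (List.replicate d c).flatten (r (i + d)) := by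
  intro d
  induction d with
  | zero => intro i _; simp
  | succ d ih =>
    intro i hik
    rw [flatten_replicate_succ, reads_append]
    refine ⟨r (i + 1), h i (by omega), ?_⟩
    have := ih (i + 1) (by omega)
    rwa [show i + 1 + d = i + (d + 1) from by omega] at this

end Graph

section MainLemma

variable {H : Subgroup (FreeGroup (Fin n))}

lemma main_bound (H : Subgroup (FreeGroup (Fin n))) (hH : H.FG) (u : FreeGroup (Fin n)) :
    ∃ N : ℕ, ∀ w : FreeGroup (Fin n), relOrdCoset H u w ≤ N := by
  classical
  obtain ⟨S, hSH, hSfin⟩ := (Subgroup.fg_iff H).1 hH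
  set E₀ : Set (Q H × A n × Q H) :=
    (⋃ s ∈ S, pathEdges H 1 (toWord s)) ∪ pathEdges H 1 (toWord u) with hE₀def
  set E : Set (Q H × A n × Q H) := E₀ ∪ invE H '' E₀ with hEdef
  have hE₀sch : E₀ ⊆ Sch H := by
    refine Set.union_subset ?_ (pathEdges_sub_sch _ _)
    exact Set.iUnion₂_subset fun s _ => pathEdges_sub_sch _ _
  have hsch : E ⊆ Sch H := by
    refine Set.union_subset hE₀sch ?_
    rintro e ⟨e', he', rfl⟩
    exact invE_mem_sch H (hE₀sch he')
  have hinvinv : ∀ e : Q H × A n × Q H, invE H (invE H e) = e := by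
    rintro ⟨q, a, m⟩
    simp [invE, flip_flip]
  have hsym : ∀ e ∈ E, invE H e ∈ E := by
    rintro e (he | ⟨e', he', rfl⟩)
    · exact Or.inr ⟨e, he, rfl⟩
    · exact Or.inl (by rw [hinvinv e']; exact he')
  have hE₀fin : E₀.Finite := by
    refine Set.Finite.union ?_ (pathEdges_finite _ _)
    exact Set.Finite.biUnion hSfin fun s _ => pathEdges_finite _ _
  have hfin : E.Finite := hE₀fin.union (hE₀fin.image _)
  have hVfin : (Vset E).Finite := vset_finite hfin
  -- the subgroup of loop-readable elements
  set bq : Q H := po H 1 with hbq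
  let Λ : Subgroup (FreeGroup (Fin n)) :=
    { carrier := {g | Reads H E bq (toWord g) bq}
      one_mem' := by
        show Reads H E bq (toWord 1) bq
        rw [toWord_one]
        rfl
      mul_mem' := by
        intro g g' hg hg'
        show Reads H E bq (toWord (g * g')) bq
        have happ : Reads H E bq (toWord g ++ toWord g') bq :=
          reads_append.2 ⟨bq, hg, hg'⟩
        have : toWord (g * g') = reduce (toWord g ++ toWord g') := by
          conv_lhs => rw [← mk_toWord (x := g), ← mk_toWord (x := g'), mul_mk]
          rw [toWord_mk]
        rw [this]
        exact reads_red hsch reduce.red happ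
      inv_mem' := by
        intro g hg
        show Reads H E bq (toWord g⁻¹) bq
        rw [toWord_inv]
        exact reads_invRev hsym hg }
  have hHread : ∀ h ∈ H, Reads H E bq (toWord h) bq := by
    have hS : S ⊆ Λ.carrier := by
      intro s hs
      show Reads H E bq (toWord s) bq
      have hp : pathEdges H 1 (toWord s) ⊆ E := by
        intro e he
        exact Or.inl (Or.inl (Set.mem_biUnion hs he))
      have hrd := reads_path (H := H) 1 (toWord s) hp
      rw [one_mul, mk_toWord] at hrd
      have hsH : s ∈ H := hSH ▸ Subgroup.subset_closure hs
      have hpo : po H s = bq := by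
        rw [hbq, po_eq_iff]
        simpa using Subgroup.inv_mem H hsH
      rwa [hpo] at hrd
    have hle : H ≤ Λ := by
      rw [← hSH]
      exact (Subgroup.closure_le Λ).2 hS
    intro h hh
    exact hle hh
  have hu_read : Reads H E bq (toWord u) (po H u) := by
    have hp : pathEdges H 1 (toWord u) ⊆ E := fun e he => Or.inl (Or.inr he)
    have := reads_path 1 (toWord u) hp
    rwa [one_mul, mk_toWord] at this
  have memHu_reads : ∀ z : FreeGroup (Fin n), z * u⁻¹ ∈ H →
      Reads H E bq (toWord z) (po H u) := by
    intro z hz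
    have h1 : Reads H E bq (toWord (z * u⁻¹) ++ toWord u) (po H u) :=
      reads_append.2 ⟨bq, hHread _ hz, hu_read⟩
    have h2 : reduce (toWord (z * u⁻¹) ++ toWord u) = toWord z := by
      have : mk (toWord (z * u⁻¹) ++ toWord u) = z := by
        rw [← mul_mk, mk_toWord, mk_toWord]
        group
      rw [← toWord_mk, this]
    have := reads_red hsch reduce.red h1
    rwa [h2] at this
  have reads_memHu : ∀ l : List (A n), Reads H E bq l (po H u) → mk l * u⁻¹ ∈ H := by
    intro l hl
    have := reads_target hsch hl
    rw [hbq, foldl_step_po, one_mul] at this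
    have : po H (mk l) = po H u := this.symm
    rw [po_eq_iff] at this
    simpa using Subgroup.inv_mem H this
  -- the bound
  set Vfin := hVfin.toFinset with hVfindef
  refine ⟨Vfin.card + 1, fun w => ?_⟩
  set Sset : Set ℕ := {k | 1 ≤ k ∧ w ^ k * u⁻¹ ∈ H} with hSset
  have hro : relOrdCoset H u w = sInf Sset := rfl
  by_contra hgt
  push_neg at hgt
  rw [hro] at hgt
  have hgt' : Vfin.card + 1 < sInf Sset := hgt
  have hSne : Sset.Nonempty := by
    by_contra hempty
    rw [Set.not_nonempty_iff_eq_empty] at hempty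
    rw [hempty, Nat.sInf_empty] at hgt'
    omega
  have hk₀ : sInf Sset ∈ Sset := Nat.sInf_mem hSne
  set k₀ := sInf Sset with hk₀def
  obtain ⟨hk₀1, hk₀H⟩ := hk₀
  have hwne : w ≠ 1 := by
    rintro rfl
    have h1 : (1 : ℕ) ∈ Sset := ⟨le_refl 1, by simpa using hk₀H⟩
    have := Nat.sInf_le h1
    omega
  obtain ⟨p, c, hcne, hpow⟩ := decomp w hwne
  have hread : Reads H E bq (toWord (w ^ k₀)) (po H u) := memHu_reads _ hk₀H
  rw [hpow k₀ hk₀1, reads_append] at hread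
  obtain ⟨q2, h12, h2u⟩ := hread
  rw [reads_append] at h12
  obtain ⟨q1, hbp, hflat⟩ := h12
  obtain ⟨r, hr0, hrk, hr⟩ := reads_flatten_split hflat
  -- pigeonhole among r 0, ..., r (Vfin.card)
  have hmem : ∀ i : Fin (Vfin.card + 1), r i.val ∈ Vfin := by
    intro i
    have hi : i.val < k₀ := by omega
    exact hVfin.mem_toFinset.mpr (reads_start_mem' (hr i.val hi) hcne)
  have hcardlt : Fintype.card { x // x ∈ Vfin } < Fintype.card (Fin (Vfin.card + 1)) := by
    rw [Fintype.card_coe, Fintype.card_fin]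
    omega
  obtain ⟨i, j, hij, hfij⟩ :=
    Fintype.exists_ne_map_eq_of_card_lt
      (fun i : Fin (Vfin.card + 1) => (⟨r i.val, hmem i⟩ : { x // x ∈ Vfin })) hcardlt
  have hrij : r i.val = r j.val := by
    simpa using congrArg Subtype.val hfij
  -- wlog i < j
  have key : ∀ i j : ℕ, i < j → j ≤ Vfin.card → r i = r j → False := by
    intro i j hlt hjle hreq
    set k' := k₀ - (j - i) with hk'def
    have hjk : j ≤ k₀ := by omega
    have hk'1 : 1 ≤ k' := by omega
    have hk'lt : k' < k₀ := by omega
    have h1 : Reads H E (r 0) (List.replicate i c).flatten (r i) := by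
      have := reads_flatten_of r hr i 0 (by omega)
      simpa using this
    have h2 : Reads H E (r j) (List.replicate (k₀ - j) c).flatten (r k₀) := by
      have := reads_flatten_of r hr (k₀ - j) j (by omega)
      rwa [show j + (k₀ - j) = k₀ from by omega] at this
    have h3 : Reads H E (r 0) (List.replicate k' c).flatten (r k₀) := by
      have := reads_append.2 ⟨r i, h1, hreq ▸ h2⟩
      rwa [← flatten_replicate_add, show i + (k₀ - j) = k' from by omega] at this
    have h4 : Reads H E bq (p ++ (List.replicate k' c).flatten ++ invRev p) (po H u) :=
      reads_append.2 ⟨r k₀, reads_append.2 ⟨r 0, hr0 ▸ hbp, h3⟩, hrk ▸ h2u⟩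
    have h5 : w ^ k' * u⁻¹ ∈ H := by
      have := reads_memHu _ h4
      rwa [← hpow k' hk'1, mk_toWord] at this
    have : k₀ ≤ k' := Nat.sInf_le ⟨hk'1, h5⟩
    omega
  rcases lt_trichotomy i.val j.val with h | h | h
  · exact key i.val j.val h (by omega) hrij
  · exact hij (Fin.ext h)
  · exact key j.val i.val h (by omega) hrij.symm

end MainLemma

end CosetSpec


/-- Coset spectra of finitely generated subgroups of free groups of finite rank are bounded;
in particular subgroup spectra are bounded. -/
theorem coset_spectrum_bounded (n : ℕ) (H : Subgroup (FreeGroup (Fin n))) (hH : H.FG)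
    (u : FreeGroup (Fin n)) :
    (∃ N : ℕ, ∀ w : FreeGroup (Fin n), relOrdCoset H u w ≤ N) ∧
    (∃ N : ℕ, ∀ w : FreeGroup (Fin n), relOrd H w ≤ N) := by
  constructor
  · exact CosetSpec.main_bound H hH u
  · obtain ⟨N, hN⟩ := CosetSpec.main_bound H hH 1
    refine ⟨N, fun w => ?_⟩
    have heq : relOrd H w = relOrdCoset H 1 w := by
      simp [relOrd, relOrdCoset]
    rw [heq]
    exact hN w
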